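/- arXiv:2301.11230 — 3 statements merged into one kernel-verified Lean document; each statement's English description precedes it below -/
import Mathlib

section
/- In the ring R, the element y satisfies the relation y² = y + s⁻¹·y + t²s²·y + t⁴s⁵·y; that is, this identity is a consequence of the three defining relations of R. -/
/-!
The ring `R = ℤ[s^{±1}, t^{±1}, x, y] / (x³ = 2t²sx + t³s²y, xy = t³s³y + t⁵s⁶y, t⁶s⁸ = 1)`
is modeled as a quotient of the polynomial ring `ℤ[s, s', t, t', x, y]` (variables indexed by
`Fin 6`: `0 ↦ s`, `1 ↦ s⁻¹`, `2 ↦ t`, `3 ↦ t⁻¹`, `4 ↦ x`, `5 ↦ y`) by the ideal generated by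
`s·s' − 1`, `t·t' − 1` (making `s` and `t` invertible) and the three defining relations.
-/

open MvPolynomial

noncomputable section

def boRel : Ideal (MvPolynomial (Fin 6) ℤ) :=
  Ideal.span
    { X 0 * X 1 - 1,
      X 2 * X 3 - 1,
      X 4 ^ 3 - 2 * X 2 ^ 2 * X 0 * X 4 - X 2 ^ 3 * X 0 ^ 2 * X 5,
      X 4 * X 5 - X 2 ^ 3 * X 0 ^ 3 * X 5 - X 2 ^ 5 * X 0 ^ 6 * X 5,
      X 2 ^ 6 * X 0 ^ 8 - 1 }

def R : Type := MvPolynomial (Fin 6) ℤ ⧸ boRel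

instance : CommRing R := inferInstanceAs (CommRing (MvPolynomial (Fin 6) ℤ ⧸ boRel))

/-- the element `s` of `R` -/
def s : R := Ideal.Quotient.mk boRel (X 0)
/-- the element `s⁻¹` of `R` -/
def si : R := Ideal.Quotient.mk boRel (X 1)
/-- the element `t` of `R` -/
def t : R := Ideal.Quotient.mk boRel (X 2)
/-- the element `t⁻¹` of `R` -/
def ti : R := Ideal.Quotient.mk boRel (X 3)
/-- the element `x` of `R` -/
def x : R := Ideal.Quotient.mk boRel (X 4)
/-- the element `y` of `R` -/
def y : R := Ideal.Quotient.mk boRel (X 5)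

lemma rel_zero {p : MvPolynomial (Fin 6) ℤ} (hp : p ∈ boRel) :
    Ideal.Quotient.mk boRel p = 0 := Ideal.Quotient.eq_zero_iff_mem.mpr hp

lemma hs' : s * si = 1 := by
  have h := rel_zero (p := X 0 * X 1 - 1) (Ideal.subset_span (by simp))
  have h2 : s * si - 1 = 0 := by simp at h; exact h
  linear_combination h2

lemma ht' : t * ti = 1 := by
  have h := rel_zero (p := X 2 * X 3 - 1) (Ideal.subset_span (by simp))
  have h2 : t * ti - 1 = 0 := by simp at h; exact h
  linear_combination h2

lemma h1' : x ^ 3 = 2 * t ^ 2 * s * x + t ^ 3 * s ^ 2 * y := by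
  have h := rel_zero (p := X 4 ^ 3 - 2 * X 2 ^ 2 * X 0 * X 4 - X 2 ^ 3 * X 0 ^ 2 * X 5)
    (Ideal.subset_span (by simp))
  have h2 : x ^ 3 - 2 * t ^ 2 * s * x - t ^ 3 * s ^ 2 * y = 0 := by
    simp [map_ofNat] at h; exact h
  linear_combination h2

lemma h2' : x * y = t ^ 3 * s ^ 3 * y + t ^ 5 * s ^ 6 * y := by
  have h := rel_zero (p := X 4 * X 5 - X 2 ^ 3 * X 0 ^ 3 * X 5 - X 2 ^ 5 * X 0 ^ 6 * X 5)
    (Ideal.subset_span (by simp))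
  have h2 : x * y - t ^ 3 * s ^ 3 * y - t ^ 5 * s ^ 6 * y = 0 := by
    simp [map_ofNat] at h; exact h
  linear_combination h2

lemma h3' : t ^ 6 * s ^ 8 = 1 := by
  have h := rel_zero (p := X 2 ^ 6 * X 0 ^ 8 - 1) (Ideal.subset_span (by simp))
  have h2 : t ^ 6 * s ^ 8 - 1 = 0 := by simp at h; exact h
  linear_combination h2

/-- In the ring `R`, the identity `y² = y + s⁻¹·y + t²s²·y + t⁴s⁵·y` holds, as a consequence of
the three defining relations of `R`. -/
theorem y_sq : y ^ 2 = y + si * y + t ^ 2 * s ^ 2 * y + t ^ 4 * s ^ 5 * y := by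
  have key : t ^ 3 * s ^ 2 * y ^ 2
      = t ^ 3 * s ^ 2 * (1 + si + t ^ 2 * s ^ 2 + t ^ 4 * s ^ 5) * y := by
    linear_combination (-y) * h1'
      + (x ^ 2 + (t ^ 3 * s ^ 3 + t ^ 5 * s ^ 6) * x + (t ^ 3 * s ^ 3 + t ^ 5 * s ^ 6) ^ 2
          - 2 * t ^ 2 * s) * h2'
      + (y * (t ^ 3 * s + 3 * t ^ 5 * s ^ 4 + 3 * t ^ 7 * s ^ 7
          + t ^ 3 * s ^ 2 * (t ^ 6 * s ^ 8 + 1))) * h3'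
      + (-(t ^ 3 * s) * y) * hs'
  linear_combination ti ^ 3 * si ^ 2 * key
    - (y ^ 2 - (y + si * y + t ^ 2 * s ^ 2 * y + t ^ 4 * s ^ 5 * y))
        * (1 + t * ti + (t * ti) ^ 2) * (s * si) ^ 2 * ht'
    - (y ^ 2 - (y + si * y + t ^ 2 * s ^ 2 * y + t ^ 4 * s ^ 5 * y)) * (1 + s * si) * hs'

end
end

section
/- There exists a ring homomorphism D : R → R satisfying D(t) = t⁻¹, D(s) = s⁻¹, D(x) = t⁻²s⁻¹·x, and D(y) = s·y; moreover D ∘ D is the identity map of R, so D is a ring automorphism of R of order two. -/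
/-!
The ring `R = ℤ[s^{±1}, t^{±1}, x, y] / (x³ = 2t²sx + t³s²y, xy = t³s³y + t⁵s⁶y, t⁶s⁸ = 1)`
is modeled as a quotient of the polynomial ring `ℤ[s, s', t, t', x, y]` (variables indexed by
`Fin 6`: `0 ↦ s`, `1 ↦ s⁻¹`, `2 ↦ t`, `3 ↦ t⁻¹`, `4 ↦ x`, `5 ↦ y`) by the ideal generated by
`s·s' − 1`, `t·t' − 1` (making `s` and `t` invertible) and the three defining relations.
-/

open MvPolynomial

noncomputable section

def Dval : Fin 6 → R
  | 0 => si
  | 1 => s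
  | 2 => ti
  | 3 => t
  | 4 => ti ^ 2 * si * x
  | 5 => s * y

def Dmap : MvPolynomial (Fin 6) ℤ →+* R := eval₂Hom (Int.castRingHom R) Dval

set_option maxHeartbeats 2000000 in
/-- There is a ring homomorphism `D : R → R` with `D(t) = t⁻¹`, `D(s) = s⁻¹`,
`D(x) = t⁻²s⁻¹·x`, `D(y) = s·y`, and `D ∘ D = id`, so `D` is a ring automorphism of `R` of
order two. -/
theorem exists_duality :
    ∃ D : R →+* R,
      D t = ti ∧ D s = si ∧ D x = ti ^ 2 * si * x ∧ D y = s * y ∧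
      D.comp D = RingHom.id R := by
  have mk0 : ∀ p ∈ ({X 0 * X 1 - 1,
      X 2 * X 3 - 1,
      X 4 ^ 3 - 2 * X 2 ^ 2 * X 0 * X 4 - X 2 ^ 3 * X 0 ^ 2 * X 5,
      X 4 * X 5 - X 2 ^ 3 * X 0 ^ 3 * X 5 - X 2 ^ 5 * X 0 ^ 6 * X 5,
      X 2 ^ 6 * X 0 ^ 8 - 1} : Set (MvPolynomial (Fin 6) ℤ)),
      Ideal.Quotient.mk boRel p = 0 := by
    intro p hp
    exact Ideal.Quotient.eq_zero_iff_mem.mpr (Ideal.subset_span hp)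
  have hs : s * si = 1 := by
    have h := mk0 (X 0 * X 1 - 1) (by left; rfl)
    rw [map_sub, map_mul, map_one, sub_eq_zero] at h
    exact h
  have ht : t * ti = 1 := by
    have h := mk0 (X 2 * X 3 - 1) (by right; left; rfl)
    rw [map_sub, map_mul, map_one, sub_eq_zero] at h
    exact h
  have hx3 : x ^ 3 = 2 * t ^ 2 * s * x + t ^ 3 * s ^ 2 * y := by
    have h := mk0 (X 4 ^ 3 - 2 * X 2 ^ 2 * X 0 * X 4 - X 2 ^ 3 * X 0 ^ 2 * X 5)
      (by right; right; left; rfl)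
    rw [sub_sub, map_sub, sub_eq_zero, map_add] at h
    simp only [map_mul, map_pow, map_ofNat] at h
    exact h
  have hxy : x * y = t ^ 3 * s ^ 3 * y + t ^ 5 * s ^ 6 * y := by
    have h := mk0 (X 4 * X 5 - X 2 ^ 3 * X 0 ^ 3 * X 5 - X 2 ^ 5 * X 0 ^ 6 * X 5)
      (by right; right; right; left; rfl)
    rw [sub_sub, map_sub, sub_eq_zero, map_add] at h
    simp only [map_mul, map_pow] at h
    exact h
  have hts : t ^ 6 * s ^ 8 = 1 := by
    have h := mk0 (X 2 ^ 6 * X 0 ^ 8 - 1) (by right; right; right; right; rfl)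
    rw [map_sub, map_mul, map_pow, map_pow, map_one, sub_eq_zero] at h
    exact h
  have hker : ∀ a ∈ boRel, Dmap a = 0 := by
    have hle : boRel ≤ RingHom.ker Dmap := by
      rw [boRel, Ideal.span_le]
      rintro p hp
      simp only [Set.mem_insert_iff, Set.mem_singleton_iff] at hp
      obtain rfl | rfl | rfl | rfl | rfl := hp
      · simp only [SetLike.mem_coe, RingHom.mem_ker, map_sub, map_mul, map_pow, map_one,
          map_ofNat, Dmap, eval₂Hom_X']
        show _ = (0 : R)
        simp only [Dval]
        linear_combination hs
      · simp only [SetLike.mem_coe, RingHom.mem_ker, map_sub, map_mul, map_pow, map_one,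
          map_ofNat, Dmap, eval₂Hom_X']
        show _ = (0 : R)
        simp only [Dval]
        linear_combination ht
      · simp only [SetLike.mem_coe, RingHom.mem_ker, map_sub, map_mul, map_pow, map_one,
          map_ofNat, Dmap, eval₂Hom_X']
        show _ = (0 : R)
        simp only [Dval]
        linear_combination (-2 * s ^ 7 * si * t ^ 6 * ti ^ 4 * x + s ^ 7 * si ^ 2 * t ^ 6 * ti ^ 6 * x ^ 3 - s ^ 8 * si * t ^ 6 * ti ^ 3 * y - 2 * s ^ 14 * t ^ 12 * ti ^ 4 * x + s ^ 14 * si * t ^ 12 * ti ^ 6 * x ^ 3 - s ^ 15 * t ^ 12 * ti ^ 3 * y + s ^ 21 * t ^ 18 * ti ^ 6 * x ^ 3) * hs + (-2 * s ^ 22 * t ^ 17 * ti ^ 3 * x - s ^ 23 * t ^ 17 * ti ^ 2 * y + s ^ 29 * t ^ 23 * ti ^ 5 * x ^ 3 - 2 * s ^ 30 * t ^ 22 * ti ^ 2 * x - s ^ 31 * t ^ 22 * ti * y + s ^ 37 * t ^ 28 * ti ^ 4 * x ^ 3 - 2 * s ^ 38 * t ^ 27 * ti * x - s ^ 39 * t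 ^ 27 * y + s ^ 45 * t ^ 33 * ti ^ 3 * x ^ 3 - 2 * s ^ 46 * t ^ 32 * x + s ^ 53 * t ^ 38 * ti ^ 2 * x ^ 3 + s ^ 61 * t ^ 43 * ti * x ^ 3 + s ^ 69 * t ^ 48 * x ^ 3) * ht + (s ^ 69 * t ^ 48) * hx3 + (2 * si ^ 2 * ti ^ 4 * x - si ^ 3 * ti ^ 6 * x ^ 3 + s * si ^ 2 * ti ^ 3 * y + 2 * s ^ 7 * si * t ^ 6 * ti ^ 4 * x - s ^ 7 * si ^ 2 * t ^ 6 * ti ^ 6 * x ^ 3 + s ^ 8 * si * t ^ 6 * ti ^ 3 * y + 2 * s ^ 14 * t ^ 12 * ti ^ 4 * x - s ^ 14 * si * t ^ 12 * ti ^ 6 * x ^ 3 + s ^ 15 * t ^ 12 * ti ^ 3 * y - s ^ 21 * t ^ 18 * ti ^ 6 * x ^ 3 + 2 * s ^ 22 * t ^ 17 * ti ^ 3 * x + s ^ 23 * t ^ 17 * ti ^ 2 * y - s ^ 29 * t ^ 23 * ti ^ 5 * x ^ 3 + 2 * s ^ 30 * t ^ 22 * ti ^ 2 * x + s ^ 31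 * t ^ 22 * ti * y - s ^ 37 * t ^ 28 * ti ^ 4 * x ^ 3 + 2 * s ^ 38 * t ^ 27 * ti * x + s ^ 39 * t ^ 27 * y - s ^ 45 * t ^ 33 * ti ^ 3 * x ^ 3 + 2 * s ^ 46 * t ^ 32 * x + s ^ 47 * t ^ 33 * y - s ^ 53 * t ^ 38 * ti ^ 2 * x ^ 3 + 2 * s ^ 54 * t ^ 38 * x + s ^ 55 * t ^ 39 * y - s ^ 61 * t ^ 43 * ti * x ^ 3 + 2 * s ^ 62 * t ^ 44 * x + s ^ 63 * t ^ 45 * y) * hts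
      · simp only [SetLike.mem_coe, RingHom.mem_ker, map_sub, map_mul, map_pow, map_one,
          map_ofNat, Dmap, eval₂Hom_X']
        show _ = (0 : R)
        simp only [Dval]
        linear_combination (s ^ 8 * t ^ 6 * ti ^ 2 * x * y - s ^ 8 * si ^ 2 * t ^ 6 * ti ^ 3 * y - s ^ 8 * si ^ 5 * t ^ 6 * ti ^ 5 * y - s ^ 15 * si * t ^ 12 * ti ^ 3 * y - s ^ 15 * si ^ 4 * t ^ 12 * ti ^ 5 * y - s ^ 22 * t ^ 18 * ti ^ 3 * y - s ^ 22 * si ^ 3 * t ^ 18 * ti ^ 5 * y - s ^ 29 * si ^ 2 * t ^ 24 * ti ^ 5 * y - s ^ 36 * si * t ^ 30 * ti ^ 5 * y - s ^ 43 * t ^ 36 * ti ^ 5 * y) * hs + (s ^ 16 * t ^ 11 * ti * x * y + s ^ 24 * t ^ 16 * x * y - s ^ 30 * t ^ 23 * ti ^ 2 * y - s ^ 38 * t ^ 28 * ti * y - s ^ 46 * t ^ 33 * y - s ^ 51 * t ^ 41 * ti ^ 4 * y - s ^ 59 * t ^ 46 * ti ^ 3 * y - s ^ 67 * t ^ 51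 * ti ^ 2 * y - s ^ 75 * t ^ 56 * ti * y - s ^ 83 * t ^ 61 * y) * ht + (s ^ 24 * t ^ 16) * hxy + (-s * si * ti ^ 2 * x * y + s * si ^ 3 * ti ^ 3 * y + s * si ^ 6 * ti ^ 5 * y - s ^ 8 * t ^ 6 * ti ^ 2 * x * y + s ^ 8 * si ^ 2 * t ^ 6 * ti ^ 3 * y + s ^ 8 * si ^ 5 * t ^ 6 * ti ^ 5 * y + s ^ 15 * si * t ^ 12 * ti ^ 3 * y + s ^ 15 * si ^ 4 * t ^ 12 * ti ^ 5 * y - s ^ 16 * t ^ 11 * ti * x * y + s ^ 22 * t ^ 18 * ti ^ 3 * y + s ^ 22 * si ^ 3 * t ^ 18 * ti ^ 5 * y - s ^ 27 * t ^ 19 * y + s ^ 29 * si ^ 2 * t ^ 24 * ti ^ 5 * y - s ^ 30 * t ^ 21 * y + s ^ 30 * t ^ 23 * ti ^ 2 * y - s ^ 35 * t ^ 25 * y + s ^ 36 * si * t ^ 30 * ti ^ 5 * y - s ^ 38 * t ^ 27 * y + s ^ 38 * t ^ 28 * ti * y - s ^ 43 * t ^ 31 * y + s ^ 43 * t ^ 36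 * ti ^ 5 * y - s ^ 51 * t ^ 37 * y + s ^ 51 * t ^ 41 * ti ^ 4 * y - s ^ 59 * t ^ 43 * y + s ^ 59 * t ^ 46 * ti ^ 3 * y - s ^ 67 * t ^ 49 * y + s ^ 67 * t ^ 51 * ti ^ 2 * y - s ^ 75 * t ^ 55 * y + s ^ 75 * t ^ 56 * ti * y) * hts
      · simp only [SetLike.mem_coe, RingHom.mem_ker, map_sub, map_mul, map_pow, map_one,
          map_ofNat, Dmap, eval₂Hom_X']
        show _ = (0 : R)
        simp only [Dval]
        linear_combination (s ^ 7 * si ^ 7 * t ^ 6 * ti ^ 6 + s ^ 14 * si ^ 6 * t ^ 12 * ti ^ 6 + s ^ 21 * si ^ 5 * t ^ 18 * ti ^ 6 + s ^ 28 * si ^ 4 * t ^ 24 * ti ^ 6 + s ^ 35 * si ^ 3 * t ^ 30 * ti ^ 6 + s ^ 42 * si ^ 2 * t ^ 36 * ti ^ 6 + s ^ 49 * si * t ^ 42 * ti ^ 6 + s ^ 56 * t ^ 48 * ti ^ 6) * hs + (s ^ 64 * t ^ 53 * ti ^ 5 + s ^ 72 * t ^ 58 * ti ^ 4 + s ^ 80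 * t ^ 63 * ti ^ 3 + s ^ 88 * t ^ 68 * ti ^ 2 + s ^ 96 * t ^ 73 * ti + s ^ 104 * t ^ 78) * ht + (1 - si ^ 8 * ti ^ 6 - s ^ 7 * si ^ 7 * t ^ 6 * ti ^ 6 + s ^ 8 * t ^ 6 - s ^ 14 * si ^ 6 * t ^ 12 * ti ^ 6 + s ^ 16 * t ^ 12 - s ^ 21 * si ^ 5 * t ^ 18 * ti ^ 6 + s ^ 24 * t ^ 18 - s ^ 28 * si ^ 4 * t ^ 24 * ti ^ 6 + s ^ 32 * t ^ 24 - s ^ 35 * si ^ 3 * t ^ 30 * ti ^ 6 + s ^ 40 * t ^ 30 - s ^ 42 * si ^ 2 * t ^ 36 * ti ^ 6 + s ^ 48 * t ^ 36 - s ^ 49 * si * t ^ 42 * ti ^ 6 + s ^ 56 * t ^ 42 - s ^ 56 * t ^ 48 * ti ^ 6 + s ^ 64 * t ^ 48 - s ^ 64 * t ^ 53 * ti ^ 5 + s ^ 72 * t ^ 54 - s ^ 72 * t ^ 58 * ti ^ 4 + s ^ 80 * t ^ 60 - s ^ 80 * t ^ 63 * ti ^ 3 + s ^ 88 * t ^ 66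 - s ^ 88 * t ^ 68 * ti ^ 2 + s ^ 96 * t ^ 72 - s ^ 96 * t ^ 73 * ti) * hts
    exact fun a ha => RingHom.mem_ker.mp (hle ha)
  refine ⟨Ideal.Quotient.lift boRel Dmap hker, ?_, ?_, ?_, ?_, ?_⟩
  · exact eval₂Hom_X' (Int.castRingHom R) Dval 2
  · exact eval₂Hom_X' (Int.castRingHom R) Dval 0
  · exact eval₂Hom_X' (Int.castRingHom R) Dval 4
  · exact eval₂Hom_X' (Int.castRingHom R) Dval 5
  · set D : R →+* R := Ideal.Quotient.lift boRel Dmap hker with hD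
    have hDmk : ∀ p, D (Ideal.Quotient.mk boRel p) = Dmap p := fun p => rfl
    have hDs : D s = si := eval₂Hom_X' (Int.castRingHom R) Dval 0
    have hDsi : D si = s := eval₂Hom_X' (Int.castRingHom R) Dval 1
    have hDt : D t = ti := eval₂Hom_X' (Int.castRingHom R) Dval 2
    have hDti : D ti = t := eval₂Hom_X' (Int.castRingHom R) Dval 3
    have hDx : D x = ti ^ 2 * si * x := eval₂Hom_X' (Int.castRingHom R) Dval 4
    have hDy : D y = s * y := eval₂Hom_X' (Int.castRingHom R) Dval 5
    apply Ideal.Quotient.ringHom_ext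
    apply MvPolynomial.ringHom_ext
    · intro r
      simp
    · intro i
      fin_cases i
      · show D (D s) = s
        rw [hDs, hDsi]
      · show D (D si) = si
        rw [hDsi, hDs]
      · show D (D t) = t
        rw [hDt, hDti]
      · show D (D ti) = ti
        rw [hDti, hDt]
      · show D (D x) = x
        rw [hDx, map_mul, map_mul, map_pow, hDti, hDsi, hDx]
        linear_combination (x * (s * si) * (t * ti + 1)) * ht + x * hs
      · show D (D y) = y
        rw [hDy, map_mul, hDs, hDy]
        linear_combination y * hs

end
end

section
/- In the group algebra ℤ₍₂₎[Σ₃], the elements f₁, f₂, e form a complete system of orthogonal idempotents: f₁² = f₁, f₂² = f₂, e² = e, the products f₁f₂, f₂f₁, f₁e, ef₁, f₂e, ef₂ are all zero, and f₁ + f₂ + e = 1. -/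
/-!
`ℤ₍₂₎` is the localization of `ℤ` at the prime ideal `(2)`, `Σ₃` is the symmetric group on
three letters (modeled as `Equiv.Perm (Fin 3)` with letters `1, 2, 3` corresponding to
`0, 1, 2`), and we work in the group algebra `ℤ₍₂₎[Σ₃]`.
-/

noncomputable section

/-- The prime ideal `(2)` of `ℤ`. -/
def P : Ideal ℤ := Ideal.span {(2 : ℤ)}

instance : P.IsPrime :=
  (Ideal.span_singleton_prime (by norm_num)).mpr Int.prime_two

/-- The localization `ℤ₍₂₎` of `ℤ` at the prime `(2)`. -/
abbrev ZL : Type := Localization.AtPrime P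

/-- `1/3 ∈ ℤ₍₂₎` (note `3 ∉ (2)`, so `3` is invertible in `ℤ₍₂₎`). -/
def third : ZL :=
  Localization.mk 1 ⟨3, show (3 : ℤ) ∉ P by
    rw [P, Ideal.mem_span_singleton]; omega⟩

/-- The symmetric group `Σ₃` on `{1, 2, 3}`. -/
abbrev S3 : Type := Equiv.Perm (Fin 3)

/-- The group algebra `ℤ₍₂₎[Σ₃]`. -/
abbrev GA : Type := MonoidAlgebra ZL S3

/-- A permutation regarded as an element of the group algebra `ℤ₍₂₎[Σ₃]`. -/
def g (σ : S3) : GA := MonoidAlgebra.of ZL S3 σ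

/-- the transposition `(1 2)` -/
def σ12 : S3 := Equiv.swap 0 1
/-- the transposition `(1 3)` -/
def σ13 : S3 := Equiv.swap 0 2
/-- the transposition `(2 3)` -/
def σ23 : S3 := Equiv.swap 1 2
/-- the 3-cycle `(1 2 3)` -/
def c123 : S3 := finRotate 3
/-- the 3-cycle `(1 3 2)` -/
def c132 : S3 := (finRotate 3)⁻¹

/-- `f₁ = (1 + (1 2) − (1 3) − (1 2 3))/3 ∈ ℤ₍₂₎[Σ₃]` -/
def f₁ : GA := third • (1 + g σ12 - g σ13 - g c123)

/-- `f₂ = (1 + (1 3) − (1 2) − (1 3 2))/3 ∈ ℤ₍₂₎[Σ₃]` -/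
def f₂ : GA := third • (1 + g σ13 - g σ12 - g c132)

/-- `e = (1 + (1 2 3) + (1 3 2))/3 ∈ ℤ₍₂₎[Σ₃]` -/
def e : GA := third • (1 + g c123 + g c132)

lemma h3 : (3 : ZL) * third = 1 := by
  rw [third, show (3:ZL) = Localization.mk 3 1 by
    rw [Localization.mk_one_eq_algebraMap]; norm_num,
    Localization.mk_mul, mul_one, one_mul]
  exact Localization.mk_self
    (⟨3, show (3:ℤ) ∉ P by rw [P, Ideal.mem_span_singleton]; omega⟩ : P.primeCompl)

lemma hg (σ τ : S3) : g σ * g τ = g (σ * τ) := (map_mul (MonoidAlgebra.of ZL S3) σ τ).symm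

lemma hg1 : g 1 = 1 := rfl

lemma m01 : σ12 * σ12 = 1 := by decide
lemma m02 : σ12 * σ13 = c132 := by decide
lemma m03 : σ12 * c123 = σ23 := by decide
lemma m04 : σ12 * c132 = σ13 := by decide
lemma m05 : σ13 * σ12 = c123 := by decide
lemma m06 : σ13 * σ13 = 1 := by decide
lemma m07 : σ13 * c123 = σ12 := by decide
lemma m08 : σ13 * c132 = σ23 := by decide
lemma m09 : c123 * σ12 = σ13 := by decide
lemma m10 : c123 * σ13 = σ23 := by decide
lemma m11 : c123 * c123 = c132 := by decide
lemma m12 : c123 * c132 = 1 := by decide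
lemma m13 : c132 * σ12 = σ23 := by decide
lemma m14 : c132 * σ13 = σ12 := by decide
lemma m15 : c132 * c123 = 1 := by decide
lemma m16 : c132 * c132 = c123 := by decide

lemma mul_smul_key (X Y Z : GA) (h : X * Y = Z + Z + Z) :
    (third • X) * (third • Y) = third • Z := by
  rw [smul_mul_assoc, mul_smul_comm, smul_smul, h,
    show Z + Z + Z = (3:ZL) • Z by
      rw [show (3:ZL) = 1 + 1 + 1 by norm_num, add_smul, add_smul, one_smul],
    smul_smul, mul_assoc, mul_comm third (3:ZL), h3, mul_one]

lemma mul_zero_key (X Y : GA) (h : X * Y = 0) :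
    (third • X) * (third • Y) = 0 := by
  rw [smul_mul_assoc, mul_smul_comm, h, smul_zero, smul_zero]

/-- In `ℤ₍₂₎[Σ₃]`, the elements `f₁`, `f₂`, `e` form a complete system of orthogonal
idempotents. -/
theorem complete_orthogonal_idempotents :
    f₁ * f₁ = f₁ ∧ f₂ * f₂ = f₂ ∧ e * e = e ∧
    f₁ * f₂ = 0 ∧ f₂ * f₁ = 0 ∧ f₁ * e = 0 ∧ e * f₁ = 0 ∧ f₂ * e = 0 ∧ e * f₂ = 0 ∧
    f₁ + f₂ + e = 1 := by
  refine ⟨?_, ?_, ?_, ?_, ?_, ?_, ?_, ?_, ?_, ?_⟩ <;> simp only [f₁, f₂, e]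
  · apply mul_smul_key
    simp only [mul_add, add_mul, mul_sub, sub_mul, mul_one, one_mul, hg,
      m01, m02, m03, m04, m05, m06, m07, m08, m09, m10, m11, m12, m13, m14, m15, m16, hg1]
    abel
  · apply mul_smul_key
    simp only [mul_add, add_mul, mul_sub, sub_mul, mul_one, one_mul, hg,
      m01, m02, m03, m04, m05, m06, m07, m08, m09, m10, m11, m12, m13, m14, m15, m16, hg1]
    abel
  · apply mul_smul_key
    simp only [mul_add, add_mul, mul_sub, sub_mul, mul_one, one_mul, hg,
      m01, m02, m03, m04, m05, m06, m07, m08, m09, m10, m11, m12, m13, m14, m15, m16, hg1]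
    abel
  · apply mul_zero_key
    simp only [mul_add, add_mul, mul_sub, sub_mul, mul_one, one_mul, hg,
      m01, m02, m03, m04, m05, m06, m07, m08, m09, m10, m11, m12, m13, m14, m15, m16, hg1]
    abel
  · apply mul_zero_key
    simp only [mul_add, add_mul, mul_sub, sub_mul, mul_one, one_mul, hg,
      m01, m02, m03, m04, m05, m06, m07, m08, m09, m10, m11, m12, m13, m14, m15, m16, hg1]
    abel
  · apply mul_zero_key
    simp only [mul_add, add_mul, mul_sub, sub_mul, mul_one, one_mul, hg,
      m01, m02, m03, m04, m05, m06, m07, m08, m09, m10, m11, m12, m13, m14, m15, m16, hg1]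
    abel
  · apply mul_zero_key
    simp only [mul_add, add_mul, mul_sub, sub_mul, mul_one, one_mul, hg,
      m01, m02, m03, m04, m05, m06, m07, m08, m09, m10, m11, m12, m13, m14, m15, m16, hg1]
    abel
  · apply mul_zero_key
    simp only [mul_add, add_mul, mul_sub, sub_mul, mul_one, one_mul, hg,
      m01, m02, m03, m04, m05, m06, m07, m08, m09, m10, m11, m12, m13, m14, m15, m16, hg1]
    abel
  · apply mul_zero_key
    simp only [mul_add, add_mul, mul_sub, sub_mul, mul_one, one_mul, hg,
      m01, m02, m03, m04, m05, m06, m07, m08, m09, m10, m11, m12, m13, m14, m15, m16, hg1]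
    abel
  · rw [← smul_add, ← smul_add,
      show (1 + g σ12 - g σ13 - g c123) + (1 + g σ13 - g σ12 - g c132) + (1 + g c123 + g c132)
        = (1:GA) + 1 + 1 by abel,
      show (1:GA) + 1 + 1 = (3:ZL) • (1:GA) by
        rw [show (3:ZL) = 1 + 1 + 1 by norm_num, add_smul, add_smul, one_smul],
      smul_smul, mul_comm, h3, one_smul]

end
end
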